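/- If F : ℝ^n → ℝ^n is continuously differentiable and a residual F_i depends only on variables with indices in a set S_i (i.e., ∂F_i/∂x_j = 0 for j ∉ S_i), then each row i of the Jacobian has support contained in S_i, and the secant system restricted to columns in S_i has the true Jacobian row as an approximate solution with error O(max_ℓ ‖x^k - x^{k-ℓ}‖²) when F is twice continuously differentiable. -/

import Mathlib

theorem sparse_jacobian_secant_approx {n : ℕ}
    (F : (Fin n → ℝ) → (Fin n → ℝ)) (hF : ContDiff ℝ 2 F)
    (S : Fin n → Finset (Fin n))
    (hS : ∀ (i j : Fin n), j ∉ S i → ∀ (x : Fin n → ℝ) (t : ℝ),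
      F (Function.update x j t) i = F x i) :
    (∀ (i j : Fin n), j ∉ S i → ∀ x : Fin n → ℝ,
      fderiv ℝ (fun y => F y i) x (Pi.single j 1) = 0) ∧
    (∀ a : Fin n → ℝ, ∃ C > 0, ∃ ε > 0,
      ∀ xk xp : Fin n → ℝ, xk ∈ Metric.ball a ε → xp ∈ Metric.ball a ε →
        ∀ i : Fin n,
          |F xk i - F xp i -
            ∑ j ∈ S i, fderiv ℝ (fun y => F y i) xk (Pi.single j 1) * (xk j - xp j)|
          ≤ C * ‖xk - xp‖ ^ 2) := by
  have hFdiff : Differentiable ℝ F := hF.differentiable two_ne_zero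
  -- component functions are C²
  have hg : ∀ i : Fin n, ContDiff ℝ 2 (fun y => F y i) := fun i =>
    (ContinuousLinearMap.proj (R := ℝ) (φ := fun _ : Fin n => ℝ) i).contDiff.comp hF
  have hgdiff : ∀ i : Fin n, Differentiable ℝ (fun y => F y i) := fun i =>
    (hg i).differentiable two_ne_zero
  -- Part 1
  have part1 : ∀ (i j : Fin n), j ∉ S i → ∀ x : Fin n → ℝ,
      fderiv ℝ (fun y => F y i) x (Pi.single j 1) = 0 := by
    intro i j hj x
    have hc : HasDerivAt (fun t : ℝ => x + t • (Pi.single j 1 : Fin n → ℝ))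
        (Pi.single j 1 : Fin n → ℝ) 0 := by
      simpa using ((hasDerivAt_id (0 : ℝ)).smul_const (Pi.single j 1 : Fin n → ℝ)).const_add x
    have hcomp : HasDerivAt (fun t : ℝ => F (x + t • (Pi.single j 1 : Fin n → ℝ)) i)
        (fderiv ℝ (fun y => F y i) x (Pi.single j 1)) 0 := by
      have h0 : x + (0 : ℝ) • (Pi.single j 1 : Fin n → ℝ) = x := by simp
      have := ((hgdiff i) (x + (0 : ℝ) • (Pi.single j 1 : Fin n → ℝ))).hasFDerivAt.comp_hasDerivAt 0 hc
      rw [h0] at this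
      exact this
    have hconst : (fun t : ℝ => F (x + t • (Pi.single j 1 : Fin n → ℝ)) i) = fun _ => F x i := by
      funext t
      have hx : x + t • (Pi.single j 1 : Fin n → ℝ) = Function.update x j (x j + t) := by
        funext k
        by_cases hk : k = j
        · subst hk; simp [Function.update]
        · simp [Function.update, hk, Pi.single_eq_of_ne hk]
      rw [hx, hS i j hj]
    rw [hconst] at hcomp
    exact hcomp.unique (hasDerivAt_const 0 (F x i))
  refine ⟨part1, ?_⟩
  -- Part 2
  intro a
  set D := fderiv ℝ F with hD
  -- relation between fderiv of component and fderiv of F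
  have key : ∀ (i : Fin n) (x : Fin n → ℝ) (v : Fin n → ℝ),
      fderiv ℝ (fun y => F y i) x v = D x v i := by
    intro i x v
    have h := ((ContinuousLinearMap.proj (R := ℝ) (φ := fun _ : Fin n => ℝ) i).hasFDerivAt.comp
      x (hFdiff x).hasFDerivAt).fderiv
    have : fderiv ℝ (fun y => F y i) x
        = (ContinuousLinearMap.proj (R := ℝ) (φ := fun _ : Fin n => ℝ) i).comp (D x) := h
    rw [this]; rfl
  -- Lipschitz bound for D near a
  have hD1 : ContDiff ℝ 1 D := hF.fderiv_right (by norm_num)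
  obtain ⟨K, s, hs, hK⟩ := hD1.contDiffAt.exists_lipschitzOnWith (x := a)
  obtain ⟨ε, εpos, hball⟩ := Metric.mem_nhds_iff.mp hs
  refine ⟨K + 1, by positivity, ε, εpos, ?_⟩
  intro xk xp hxk hxp i
  -- vector-valued second-order estimate
  have hseg : segment ℝ xp xk ⊆ Metric.ball a ε :=
    (convex_ball a ε).segment_subset hxp hxk
  set f := fun y => F y - D xk y with hf
  have hfd : ∀ y : Fin n → ℝ, DifferentiableAt ℝ f y := fun y =>
    (hFdiff y).sub ((D xk).differentiableAt)
  have hfderiv : ∀ y : Fin n → ℝ, fderiv ℝ f y = D y - D xk := by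
    intro y
    rw [hf, fderiv_fun_sub (hFdiff y) (D xk).differentiableAt, (D xk).fderiv]
  have hbound : ∀ y ∈ segment ℝ xp xk, ‖fderiv ℝ f y‖ ≤ (K : ℝ) * ‖xk - xp‖ := by
    intro y hy
    rw [hfderiv y]
    have hys : y ∈ s := hball (hseg hy)
    have hxks : xk ∈ s := hball hxk
    have h1 : dist (D y) (D xk) ≤ (K : ℝ) * dist y xk := hK.dist_le_mul y hys xk hxks
    have h2 : dist y xk ≤ ‖xk - xp‖ := by
      obtain ⟨u, v, hu, hv, huv, rfl⟩ := hy
      have : u • xp + v • xk - xk = u • (xp - xk) := by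
        rw [smul_sub]
        have : v • xk = xk - u • xk := by rw [eq_sub_iff_add_eq, ← add_smul, add_comm v u, huv, one_smul]
        rw [this]; abel
      rw [dist_eq_norm, this, norm_smul]
      calc ‖u‖ * ‖xp - xk‖ ≤ 1 * ‖xp - xk‖ := by
            apply mul_le_mul_of_nonneg_right _ (norm_nonneg _)
            rw [Real.norm_eq_abs, abs_of_nonneg hu]; linarith
        _ = ‖xk - xp‖ := by rw [one_mul, norm_sub_rev]
    calc ‖D y - D xk‖ = dist (D y) (D xk) := (dist_eq_norm _ _).symm
      _ ≤ (K : ℝ) * dist y xk := h1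
      _ ≤ (K : ℝ) * ‖xk - xp‖ := by
          exact mul_le_mul_of_nonneg_left h2 (K.coe_nonneg)
  have hmvt : ‖f xk - f xp‖ ≤ ((K : ℝ) * ‖xk - xp‖) * ‖xk - xp‖ :=
    (convex_segment xp xk).norm_image_sub_le_of_norm_fderiv_le
      (fun y _ => hfd y) hbound (left_mem_segment ℝ xp xk) (right_mem_segment ℝ xp xk)
  have hvec : ‖F xk - F xp - D xk (xk - xp)‖ ≤ (K : ℝ) * ‖xk - xp‖ ^ 2 := by
    have : f xk - f xp = F xk - F xp - D xk (xk - xp) := by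
      simp only [hf, map_sub]; abel
    rw [this] at hmvt
    calc ‖F xk - F xp - D xk (xk - xp)‖ ≤ ((K : ℝ) * ‖xk - xp‖) * ‖xk - xp‖ := hmvt
      _ = (K : ℝ) * ‖xk - xp‖ ^ 2 := by ring
  -- rewrite the sum
  have hsum : ∑ j ∈ S i, fderiv ℝ (fun y => F y i) xk (Pi.single j 1) * (xk j - xp j)
      = D xk (xk - xp) i := by
    have hext : ∑ j ∈ S i, fderiv ℝ (fun y => F y i) xk (Pi.single j 1) * (xk j - xp j)
        = ∑ j, fderiv ℝ (fun y => F y i) xk (Pi.single j 1) * (xk j - xp j) := by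
      apply Finset.sum_subset (Finset.subset_univ _)
      intro j _ hj
      rw [part1 i j hj xk, zero_mul]
    rw [hext]
    have hdecomp : D xk (xk - xp) = ∑ j, (xk j - xp j) • D xk (Pi.single j 1 : Fin n → ℝ) := by
      conv_lhs => rw [show xk - xp = ∑ j, Pi.single j ((xk - xp) j) from
        (Finset.univ_sum_single (xk - xp)).symm]
      rw [map_sum]
      apply Finset.sum_congr rfl
      intro j _
      have : (Pi.single j ((xk - xp) j) : Fin n → ℝ) = (xk j - xp j) • (Pi.single j 1 : Fin n → ℝ) := by
        rw [← Pi.single_smul, smul_eq_mul, mul_one]; rfl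
      rw [this, map_smul]
    rw [hdecomp]
    simp only [Finset.sum_apply, Pi.smul_apply, smul_eq_mul]
    apply Finset.sum_congr rfl
    intro j _
    rw [key i xk (Pi.single j 1)]
    ring
  rw [hsum]
  have hcomp : |F xk i - F xp i - D xk (xk - xp) i| ≤ ‖F xk - F xp - D xk (xk - xp)‖ := by
    have := norm_le_pi_norm (F xk - F xp - D xk (xk - xp)) i
    simpa [Real.norm_eq_abs] using this
  calc |F xk i - F xp i - D xk (xk - xp) i|
      ≤ ‖F xk - F xp - D xk (xk - xp)‖ := hcomp
    _ ≤ (K : ℝ) * ‖xk - xp‖ ^ 2 := hvec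
    _ ≤ ((K : ℝ) + 1) * ‖xk - xp‖ ^ 2 := by nlinarith [sq_nonneg ‖xk - xp‖, K.coe_nonneg]
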